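/- Let p be a prime and a, b, c, d ∈ ZMod p with ad − bc ≠ 0. If the rational function X(cX+d)/(aX+b) ∈ F_p(X) is a perfect h-th power times a constant in F_p(X) for some h ≥ 3, then b = 0 and c = 0. -/

import Mathlib

open Polynomial

private lemma rootMult_pow {K : Type*} [CommRing K] [IsDomain K] {q : K[X]} (hq : q ≠ 0)
    (x : K) (n : ℕ) : rootMultiplicity x (q ^ n) = n * rootMultiplicity x q := by
  induction n with
  | zero => simp [Polynomial.rootMultiplicity_C]
  | succ n ih =>
      rw [pow_succ, Polynomial.rootMultiplicity_mul (mul_ne_zero (pow_ne_zero _ hq) hq), ih]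
      ring

theorem hth_power_rational_function_forces_diagonal (p : ℕ) [Fact p.Prime]
    (a b c d : ZMod p) (hdet : a * d - b * c ≠ 0) (h : ℕ) (hh : 3 ≤ h)
    (hpow : ∃ (t : ZMod p) (P : RatFunc (ZMod p)),
      RatFunc.X * (RatFunc.C c * RatFunc.X + RatFunc.C d) /
          (RatFunc.C a * RatFunc.X + RatFunc.C b) = RatFunc.C t * P ^ h) :
    b = 0 ∧ c = 0 := by
  obtain ⟨t, P, hP⟩ := hpow
  set N : (ZMod p)[X] := X * (C c * X + C d) with hN
  set D : (ZMod p)[X] := C a * X + C b with hD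
  have hcd : ¬(c = 0 ∧ d = 0) := by rintro ⟨rfl, rfl⟩; simp at hdet
  have hab : ¬(a = 0 ∧ b = 0) := by rintro ⟨rfl, rfl⟩; simp at hdet
  have hlin : ∀ u v : ZMod p, ¬(u = 0 ∧ v = 0) → (C u * X + C v : (ZMod p)[X]) ≠ 0 := by
    intro u v huv h0
    apply huv
    have h1 : (C u * X + C v : (ZMod p)[X]).coeff 1 = u := by
      simp [coeff_add, coeff_C_mul, coeff_C]
    have h2 : (C u * X + C v : (ZMod p)[X]).coeff 0 = v := by
      simp [coeff_add, coeff_C_mul, coeff_C]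
    rw [h0] at h1 h2
    simp at h1 h2
    exact ⟨h1.symm, h2.symm⟩
  have hcd0 : (C c * X + C d : (ZMod p)[X]) ≠ 0 := hlin c d hcd
  have hD0 : D ≠ 0 := hlin a b hab
  have hN0 : N ≠ 0 := mul_ne_zero Polynomial.X_ne_zero hcd0
  -- rewrite the hypothesis as an equation of images of polynomials
  have hP' : (algebraMap (ZMod p)[X] (RatFunc (ZMod p))) N /
      (algebraMap (ZMod p)[X] (RatFunc (ZMod p))) D = RatFunc.C t * P ^ h := by
    rw [← hP, hN, hD]
    simp [map_mul, map_add, RatFunc.algebraMap_X, RatFunc.algebraMap_C]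
  have haD : (algebraMap (ZMod p)[X] (RatFunc (ZMod p))) D ≠ 0 := by
    simpa using hD0
  have haN : (algebraMap (ZMod p)[X] (RatFunc (ZMod p))) N ≠ 0 := by
    simpa using hN0
  have hlhs : (algebraMap (ZMod p)[X] (RatFunc (ZMod p))) N /
      (algebraMap (ZMod p)[X] (RatFunc (ZMod p))) D ≠ 0 := div_ne_zero haN haD
  have ht0 : t ≠ 0 := by
    rintro rfl
    rw [hP'] at hlhs
    simp at hlhs
  have hP0 : P ≠ 0 := by
    rintro rfl
    rw [hP'] at hlhs
    have : (0:ℕ) < h := by omega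
    simp [zero_pow this.ne'] at hlhs
  have hnum0 : P.num ≠ 0 := RatFunc.num_ne_zero hP0
  have hden0 : P.denom ≠ 0 := P.denom_ne_zero
  have haden : (algebraMap (ZMod p)[X] (RatFunc (ZMod p))) P.denom ≠ 0 := by
    simpa using hden0
  -- the polynomial identity
  have key : N * P.denom ^ h = C t * P.num ^ h * D := by
    apply RatFunc.algebraMap_injective (ZMod p)
    have hPe : (algebraMap (ZMod p)[X] (RatFunc (ZMod p))) P.num ^ h /
        (algebraMap (ZMod p)[X] (RatFunc (ZMod p))) P.denom ^ h = P ^ h := by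
      rw [← div_pow, RatFunc.num_div_denom]
    rw [div_eq_iff haD] at hP'
    simp only [map_mul, map_pow]
    rw [hP', ← hPe, RatFunc.algebraMap_C]
    field_simp
  -- compare root multiplicities
  have hCt : (C t : (ZMod p)[X]) ≠ 0 := by simpa using ht0
  have multeq : ∀ x : ZMod p,
      rootMultiplicity x N + h * rootMultiplicity x P.denom =
      h * rootMultiplicity x P.num + rootMultiplicity x D := by
    intro x
    have h1 : rootMultiplicity x (N * P.denom ^ h) =
        rootMultiplicity x N + h * rootMultiplicity x P.denom := by
      rw [Polynomial.rootMultiplicity_mul (mul_ne_zero hN0 (pow_ne_zero _ hden0)),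
        rootMult_pow hden0]
    have h2 : rootMultiplicity x (C t * P.num ^ h * D) =
        h * rootMultiplicity x P.num + rootMultiplicity x D := by
      rw [Polynomial.rootMultiplicity_mul
          (mul_ne_zero (mul_ne_zero hCt (pow_ne_zero _ hnum0)) hD0),
        Polynomial.rootMultiplicity_mul (mul_ne_zero hCt (pow_ne_zero _ hnum0)),
        rootMult_pow hnum0, Polynomial.rootMultiplicity_C, zero_add]
    rw [← h1, ← h2, key]
  have hXmult : rootMultiplicity (0 : ZMod p) (X : (ZMod p)[X]) = 1 := by
    have := Polynomial.rootMultiplicity_X_sub_C_self (x := (0 : ZMod p))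
    simpa using this
  -- first: b = 0
  have hb : b = 0 := by
    by_contra hb
    have hD0mult : rootMultiplicity (0 : ZMod p) D = 0 := by
      apply Polynomial.rootMultiplicity_eq_zero
      simp [hD, Polynomial.IsRoot, hb]
    set ε := rootMultiplicity (0 : ZMod p) (C c * X + C d) with hε
    have hεle : ε ≤ 1 := by
      have hdvd := Polynomial.pow_rootMultiplicity_dvd (C c * X + C d) (0 : ZMod p)
      have := Polynomial.natDegree_le_of_dvd hdvd hcd0
      have hdeg : ((X - C (0 : ZMod p)) ^ ε).natDegree = ε := by
        simp [Polynomial.natDegree_pow]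
      rw [hdeg] at this
      exact this.trans (Polynomial.natDegree_linear_le)
    have hNmult : rootMultiplicity (0 : ZMod p) N = 1 + ε := by
      rw [hN, Polynomial.rootMultiplicity_mul (mul_ne_zero Polynomial.X_ne_zero hcd0),
        hXmult]
    have := multeq 0
    rw [hNmult, hD0mult] at this
    -- 1 + ε + h * m1 = h * m2
    have hdvd : h ∣ 1 + ε := by
      have h2 : h * rootMultiplicity (0:ZMod p) P.num -
          h * rootMultiplicity (0:ZMod p) P.denom = 1 + ε := by omega
      exact h2 ▸ Nat.dvd_sub (dvd_mul_right _ _) (dvd_mul_right _ _)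
    have := Nat.le_of_dvd (by omega) hdvd
    omega
  refine ⟨hb, ?_⟩
  -- now c = 0
  by_contra hc
  have had : a * d ≠ 0 := by simpa [hb] using hdet
  have ha : a ≠ 0 := fun h0 => had (by simp [h0])
  have hd : d ≠ 0 := fun h0 => had (by simp [h0])
  set r : ZMod p := -(d / c) with hr
  have hcr : c * r = -d := by
    rw [hr]
    field_simp
  have hr0 : r ≠ 0 := by
    intro h0
    rw [h0, mul_zero] at hcr
    exact hd (neg_eq_zero.mp hcr.symm)
  have hfac : (C c * X + C d : (ZMod p)[X]) = C c * (X - C r) := by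
    rw [mul_sub, ← C_mul, hcr, map_neg, sub_neg_eq_add]
  have hlinmult : rootMultiplicity r (C c * X + C d : (ZMod p)[X]) = 1 := by
    rw [hfac, Polynomial.rootMultiplicity_mul (by rw [← hfac]; exact hcd0),
      Polynomial.rootMultiplicity_C, Polynomial.rootMultiplicity_X_sub_C_self, zero_add]
  have hXr : rootMultiplicity r (X : (ZMod p)[X]) = 0 := by
    apply Polynomial.rootMultiplicity_eq_zero
    simp [Polynomial.IsRoot, hr0]
  have hDr : rootMultiplicity r D = 0 := by
    apply Polynomial.rootMultiplicity_eq_zero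
    simp [hD, Polynomial.IsRoot, hb, ha, hr0]
  have hNr : rootMultiplicity r N = 1 := by
    rw [hN, Polynomial.rootMultiplicity_mul (mul_ne_zero Polynomial.X_ne_zero hcd0),
      hXr, hlinmult, zero_add]
  have := multeq r
  rw [hNr, hDr] at this
  have hdvd : h ∣ 1 := by
    have h2 : h * rootMultiplicity r P.num - h * rootMultiplicity r P.denom = 1 := by omega
    exact h2 ▸ Nat.dvd_sub (dvd_mul_right _ _) (dvd_mul_right _ _)
  have := Nat.le_of_dvd one_pos hdvd
  omega
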